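/- Let d ≥ 1, let θ0 ∈ ℝ^d be a unit vector, let M > 0, δ > 0, and let μ be a measure on ℝ^d satisfying μ(A) ≤ M·λ(A) for every Borel set A (λ = Lebesgue measure) and μ({x : ‖x‖ > 1}) = 0. Define the envelope function ḡ_δ(x) := ‖x‖·δ if |⟪x,θ0⟫| ≤ ‖x‖·δ and ḡ_δ(x) := 0 otherwise. Then ∫ ḡ_δ(x)² dμ(x) ≤ 2M·V_{d−1}·δ³, where V_{d−1} is the Lebesgue volume of the closed unit ball of ℝ^{d−1} (with V_0 := 1). -/

import Mathlib

open MeasureTheory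
open scoped RealInnerProductSpace

lemma slab_volume_le {n : ℕ} (θ0 : EuclideanSpace ℝ (Fin (n+1))) (hθ0 : ‖θ0‖ = 1)
    (δ : ℝ) (hδ : 0 < δ) :
    volume ({x : EuclideanSpace ℝ (Fin (n+1)) | |⟪x, θ0⟫| ≤ δ} ∩ Metric.closedBall 0 1)
      ≤ ENNReal.ofReal (2*δ) * volume (Metric.closedBall (0 : EuclideanSpace ℝ (Fin n)) 1) := by
  -- orthonormal basis with b 0 = θ0
  obtain ⟨b, hb⟩ : ∃ b : OrthonormalBasis (Fin (n+1)) ℝ (EuclideanSpace ℝ (Fin (n+1))),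
      b 0 = θ0 := by
    have hcard : Module.finrank ℝ (EuclideanSpace ℝ (Fin (n+1))) = Fintype.card (Fin (n+1)) := by
      simp
    have horth : Orthonormal ℝ (Set.restrict {(0 : Fin (n+1))} (fun _ => θ0)) := by
      constructor
      · intro i; exact hθ0
      · intro i j hij
        exact absurd (Subsingleton.elim i j) hij
    obtain ⟨b, hb⟩ := horth.exists_orthonormalBasis_extension_of_card_eq hcard
    exact ⟨b, hb 0 rfl⟩
  set T : Set (EuclideanSpace ℝ (Fin (n+1))) :=
    {y | |y 0| ≤ δ} ∩ Metric.closedBall 0 1 with hT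
  have hTmeas : MeasurableSet T := by
    apply MeasurableSet.inter
    · exact measurableSet_le (by fun_prop) measurable_const
    · exact measurableSet_closedBall
  have hpre : {x : EuclideanSpace ℝ (Fin (n+1)) | |⟪x, θ0⟫| ≤ δ} ∩ Metric.closedBall 0 1
      = ⇑b.repr ⁻¹' T := by
    ext x
    simp only [hT, Set.mem_inter_iff, Set.mem_preimage, Set.mem_setOf_eq,
      Metric.mem_closedBall, dist_zero_right]
    rw [b.repr.norm_map, OrthonormalBasis.repr_apply_apply, hb, real_inner_comm]
  rw [hpre, b.measurePreserving_repr.measure_preimage hTmeas.nullMeasurableSet]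
  -- now push to ℝ × EuclideanSpace ℝ (Fin n)
  set e1 := (MeasurableEquiv.toLp 2 (Fin (n+1) → ℝ)).symm
  set e2 := MeasurableEquiv.piFinSuccAbove (fun _ : Fin (n+1) => ℝ) 0
  set e3 := (MeasurableEquiv.toLp 2 (Fin n → ℝ))
  set F : EuclideanSpace ℝ (Fin (n+1)) → ℝ × EuclideanSpace ℝ (Fin n) :=
    fun x => Prod.map id e3 (e2 (e1 x)) with hF
  have hFmp : MeasurePreserving F volume volume := by
    exact ((MeasurePreserving.id volume).prod
        (EuclideanSpace.volume_preserving_symm_measurableEquiv_toLp (Fin n)).symm).comp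
      ((volume_preserving_piFinSuccAbove (fun _ : Fin (n+1) => ℝ) 0).comp
        (EuclideanSpace.volume_preserving_symm_measurableEquiv_toLp (Fin (n+1))))
  set P : Set (ℝ × EuclideanSpace ℝ (Fin n)) :=
    Set.Icc (-δ) δ ×ˢ Metric.closedBall 0 1 with hP
  have hsub : T ⊆ F ⁻¹' P := by
    rintro x ⟨hx1, hx2⟩
    have hxnorm : (∑ i, x i ^ 2) ≤ 1 := by
      have h1 : ‖x‖ ≤ 1 := by simpa [dist_zero_right] using hx2
      have h2 : ‖x‖ ^ 2 ≤ 1 := by nlinarith [norm_nonneg x]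
      have h3 : ‖x‖ ^ 2 = ∑ i, x i ^ 2 := by
        rw [EuclideanSpace.norm_eq, Real.sq_sqrt (by positivity)]
        simp [sq_abs]
      linarith [h3 ▸ h2]
    constructor
    · exact abs_le.mp hx1
    · simp only [Set.mem_preimage] at *
      simp only [hP, Set.mem_prod, Metric.mem_closedBall, dist_zero_right]
      have : ‖(F x).2‖ ^ 2 ≤ 1 := by
        have hval : (F x).2 = e3 (fun j : Fin n => x j.succ) := by
          show e3 _ = _
          congr 1
        rw [hval]
        have : ‖e3 (fun j : Fin n => x j.succ)‖ ^ 2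
            = ∑ j : Fin n, x j.succ ^ 2 := by
          rw [EuclideanSpace.norm_eq, Real.sq_sqrt (by positivity)]
          simp [e3, sq_abs]
        rw [this]
        calc ∑ j : Fin n, x j.succ ^ 2
            ≤ x 0 ^ 2 + ∑ j : Fin n, x j.succ ^ 2 := by nlinarith [sq_nonneg (x 0)]
          _ = ∑ i, x i ^ 2 := (Fin.sum_univ_succ (fun i => x i ^ 2)).symm
          _ ≤ 1 := hxnorm
      nlinarith [norm_nonneg (F x).2]
  calc volume T ≤ volume (F ⁻¹' P) := measure_mono hsub
    _ = volume P := hFmp.measure_preimage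
        ((measurableSet_Icc.prod measurableSet_closedBall).nullMeasurableSet)
    _ = ENNReal.ofReal (2*δ) * volume (Metric.closedBall (0 : EuclideanSpace ℝ (Fin n)) 1) := by
        rw [hP, MeasureTheory.Measure.volume_eq_prod, Measure.prod_prod, Real.volume_Icc]
        ring_nf

/-- second-moment bound for the envelope function
`ḡ_δ(x) = ‖x‖·δ·1{|⟪x,θ0⟫| ≤ ‖x‖·δ}`: if `μ` has density bounded by `M` with respect to
Lebesgue measure and is supported on the unit ball, then `∫ ḡ_δ² dμ ≤ 2M·V_{d−1}·δ³`,
where `V_{d−1}` is the Lebesgue volume of the closed unit ball of `ℝ^{d−1}`. -/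
theorem envelope_second_moment_bound {d : ℕ} (hd : 1 ≤ d)
    (θ0 : EuclideanSpace ℝ (Fin d)) (hθ0 : ‖θ0‖ = 1)
    (M δ : ℝ) (hM : 0 < M) (hδ : 0 < δ)
    (μ : Measure (EuclideanSpace ℝ (Fin d)))
    (hdom : ∀ A : Set (EuclideanSpace ℝ (Fin d)), MeasurableSet A →
      μ A ≤ ENNReal.ofReal M * volume A)
    (hsupp : μ {x : EuclideanSpace ℝ (Fin d) | 1 < ‖x‖} = 0) :
    ∫ x, (if |⟪x, θ0⟫| ≤ ‖x‖ * δ then ‖x‖ * δ else 0) ^ 2 ∂μ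
      ≤ 2 * M * (volume (Metric.closedBall (0 : EuclideanSpace ℝ (Fin (d - 1))) 1)).toReal
          * δ ^ 3 := by
  obtain ⟨n, rfl⟩ : ∃ n, d = n + 1 := ⟨d - 1, by omega⟩
  show _ ≤ 2 * M * (volume (Metric.closedBall (0 : EuclideanSpace ℝ (Fin n)) 1)).toReal * δ ^ 3
  set Vnn : ENNReal := volume (Metric.closedBall (0 : EuclideanSpace ℝ (Fin n)) 1) with hVnn
  have hVfin : Vnn ≠ ⊤ := (measure_closedBall_lt_top).ne
  set S : Set (EuclideanSpace ℝ (Fin (n+1))) :=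
    {x | |⟪x, θ0⟫| ≤ δ} ∩ Metric.closedBall 0 1 with hS
  have hSmeas : MeasurableSet S := by
    apply MeasurableSet.inter
    · exact measurableSet_le ((continuous_id.inner continuous_const).abs.measurable) measurable_const
    · exact measurableSet_closedBall
  have hμS_lt : μ S < ⊤ := by
    refine lt_of_le_of_lt (hdom S hSmeas) ?_
    refine ENNReal.mul_lt_top ENNReal.ofReal_lt_top ?_
    exact lt_of_le_of_lt (measure_mono Set.inter_subset_right) measure_closedBall_lt_top
  have hae : ∀ᵐ x ∂μ, ‖x‖ ≤ 1 := by
    rw [ae_iff]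
    simpa [not_le] using hsupp
  set f : EuclideanSpace ℝ (Fin (n+1)) → ℝ :=
    fun x => (if |⟪x, θ0⟫| ≤ ‖x‖ * δ then ‖x‖ * δ else 0) ^ 2 with hf
  set g : EuclideanSpace ℝ (Fin (n+1)) → ℝ := S.indicator (fun _ => δ ^ 2) with hg
  have hfmeas : Measurable f := by
    apply Measurable.pow_const
    exact Measurable.ite (measurableSet_le ((continuous_id.inner continuous_const).abs.measurable) ((continuous_norm.mul continuous_const).measurable)) ((continuous_norm.mul continuous_const).measurable)
      measurable_const
  have hgint : Integrable g μ := by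
    rw [hg, integrable_indicator_iff hSmeas]
    exact integrableOn_const hμS_lt.ne
  have hfg : ∀ᵐ x ∂μ, f x ≤ g x := by
    filter_upwards [hae] with x hx
    rw [hf, hg]
    by_cases hc : |⟪x, θ0⟫| ≤ ‖x‖ * δ
    · have hxS : x ∈ S := by
        refine ⟨hc.trans ?_, by simpa [dist_zero_right] using hx⟩
        nlinarith [norm_nonneg x]
      rw [Set.indicator_of_mem hxS]
      simp only [if_pos hc]
      have : ‖x‖ * δ ≤ δ := by nlinarith [norm_nonneg x]
      nlinarith [mul_nonneg (norm_nonneg x) hδ.le]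
    · simp only [if_neg hc]
      have h0 : (0:ℝ) ≤ S.indicator (fun _ => δ ^ 2) x :=
        Set.indicator_apply_nonneg (fun _ => by positivity)
      simpa using h0
  have hfint : Integrable f μ := by
    refine hgint.mono' hfmeas.aestronglyMeasurable ?_
    filter_upwards [hfg] with x hx
    rwa [Real.norm_eq_abs, abs_of_nonneg (by rw [hf]; positivity)]
  have hμS : (μ S).toReal ≤ M * (2 * δ * Vnn.toReal) := by
    have h1 : μ S ≤ ENNReal.ofReal M * (ENNReal.ofReal (2 * δ) * Vnn) :=
      (hdom S hSmeas).trans (mul_le_mul_right (slab_volume_le θ0 hθ0 δ hδ) _)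
    have h2 : (ENNReal.ofReal M * (ENNReal.ofReal (2 * δ) * Vnn)).toReal
        = M * (2 * δ * Vnn.toReal) := by
      rw [ENNReal.toReal_mul, ENNReal.toReal_mul, ENNReal.toReal_ofReal hM.le,
        ENNReal.toReal_ofReal (by positivity)]
    calc (μ S).toReal ≤ (ENNReal.ofReal M * (ENNReal.ofReal (2 * δ) * Vnn)).toReal := by
          apply ENNReal.toReal_mono _ h1
          exact ENNReal.mul_ne_top ENNReal.ofReal_ne_top
            (ENNReal.mul_ne_top ENNReal.ofReal_ne_top hVfin)
      _ = M * (2 * δ * Vnn.toReal) := h2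
  calc ∫ x, f x ∂μ ≤ ∫ x, g x ∂μ := integral_mono_ae hfint hgint hfg
    _ = (μ S).toReal • δ ^ 2 := by rw [hg, integral_indicator_const _ hSmeas, measureReal_def]
    _ ≤ 2 * M * Vnn.toReal * δ ^ 3 := by
        rw [smul_eq_mul]
        have hV0 : 0 ≤ Vnn.toReal := ENNReal.toReal_nonneg
        nlinarith [ENNReal.toReal_nonneg (a := μ S), sq_nonneg δ]
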